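/- Let s₁, …, s_n be pairwise distinct complex numbers with Re(s_j) > 0 for all j, let K be the n×n matrix with entries K_{jl} = 1/(s_j + conj(s_l)), let C be an invertible diagonal complex n×n matrix, set S = diag(s₁,…,s_n), and for (x,t) ∈ ℝ² set Ξ(x,t) = C · exp(−x S − i t S²). Then for every (x,t) ∈ ℝ² the matrix I + Ξ(x,t)* K* Ξ(x,t) K is invertible; consequently the associated solution of the focusing scalar NLS equation is regular for all (x,t) ∈ ℝ². -/

import Mathlib

open Matrix

lemma quadform_pos {n : ℕ} (s : Fin n → ℂ) (hdist : Function.Injective s)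
    (hre : ∀ j : Fin n, 0 < (s j).re)
    (K : Matrix (Fin n) (Fin n) ℂ)
    (hK : ∀ j l : Fin n, K j l = 1 / (s j + (starRingEnd ℂ) (s l)))
    (v : Fin n → ℂ) (hv : v ≠ 0) :
    0 < (star v ⬝ᵥ K *ᵥ v).re := by
  classical
  set conj := starRingEnd ℂ with hconj
  have hs1 : ∀ j, s j + 1 ≠ 0 := by
    intro j h
    have : (s j + 1).re = 0 := by rw [h]; simp
    simp [Complex.add_re] at this
    linarith [hre j]
  set z : Fin n → ℂ := fun j => (s j - 1) / (s j + 1) with hz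
  have hzlt : ∀ j, ‖z j‖ < 1 := by
    intro j
    rw [hz]
    simp only
    rw [norm_div, div_lt_one (norm_pos_iff.mpr (hs1 j))]
    apply lt_of_pow_lt_pow_left₀ 2 (norm_nonneg _)
    rw [Complex.sq_norm, Complex.sq_norm]
    simp [Complex.normSq_apply, Complex.add_re, Complex.sub_re, Complex.add_im, Complex.sub_im]
    nlinarith [hre j]
  have hzinj : Function.Injective z := by
    intro a b hab
    rw [hz] at hab
    simp only at hab
    rw [div_eq_div_iff (hs1 a) (hs1 b)] at hab
    apply hdist
    have : 2 * s a = 2 * s b := by ring_nf at hab ⊢; linear_combination hab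
    field_simp at this
    exact this
  have hzz : ∀ j l, ‖z j * conj (z l)‖ < 1 := by
    intro j l
    rw [norm_mul]
    have h1 := hzlt j
    have h2 : ‖conj (z l)‖ < 1 := by
      rw [hconj, RingHomIsometric.norm_map]
      exact hzlt l
    nlinarith [norm_nonneg (z j), norm_nonneg (conj (z l))]
  set a : Fin n → ℂ := fun j => conj (v j) / (s j + 1) with hadef
  set c : ℕ → ℂ := fun k => ∑ j, a j * z j ^ k with hcdef
  have hne1 : ∀ j l, (1 : ℂ) - z j * conj (z l) ≠ 0 := by
    intro j l h
    rw [sub_eq_zero] at h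
    have := hzz j l
    rw [← h] at this
    simp at this
  have hssl : ∀ j l, s j + conj (s l) ≠ 0 := by
    intro j l h
    have : (s j + conj (s l)).re = 0 := by rw [h]; simp
    rw [hconj] at this
    simp [Complex.add_re, Complex.conj_re] at this
    linarith [hre j, hre l]
  have hcs1 : ∀ l, conj (s l) + 1 ≠ 0 := by
    intro l h
    apply hs1 l
    have : conj (conj (s l) + 1) = 0 := by rw [h]; simp
    simpa using this
  have key : ∀ j l, conj (v j) * (K j l * v l)
      = (2 * a j * conj (a l)) * (1 - z j * conj (z l))⁻¹ := by
    intro j l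
    have hca : conj (a l) = v l / (conj (s l) + 1) := by
      rw [hadef]; simp [map_div₀]
    have hcz : conj (z l) = (conj (s l) - 1) / (conj (s l) + 1) := by
      rw [hz]; simp [map_div₀]
    have hden : ((s j + 1) * (conj (s l) + 1)) ≠ 0 := mul_ne_zero (hs1 j) (hcs1 l)
    have hinv : (1 : ℂ) - z j * conj (z l)
        = (2 * (s j + conj (s l))) / ((s j + 1) * (conj (s l) + 1)) := by
      rw [eq_div_iff hden, hcz, hz]
      simp only
      field_simp [hs1 j, hcs1 l]
      ring
    rw [hK, hca, hinv, inv_div]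
    simp only [hadef]
    have h2 : (2 : ℂ) * (s j + conj (s l)) ≠ 0 := by
      simp [hssl j l]
    field_simp [hs1 j, hcs1 l, hssl j l]
  have hgeo : ∀ j l, Summable (fun k : ℕ => (2 * a j * conj (a l)) * (z j * conj (z l)) ^ k) :=
    fun j l => (summable_geometric_of_norm_lt_one (hzz j l)).mul_left _
  have hg : Summable (fun k : ℕ => ∑ j, ∑ l, (2 * a j * conj (a l)) * (z j * conj (z l)) ^ k) :=
    summable_sum (fun j _ => summable_sum (fun l _ => hgeo j l))
  have hdot : star v ⬝ᵥ K *ᵥ v = ∑ j, ∑ l, conj (v j) * (K j l * v l) := by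
    simp [dotProduct, Matrix.mulVec, Finset.mul_sum, hconj, Complex.star_def]
  have hLHS : star v ⬝ᵥ K *ᵥ v
      = ∑' k : ℕ, ∑ j, ∑ l, (2 * a j * conj (a l)) * (z j * conj (z l)) ^ k := by
    rw [hdot]
    calc ∑ j, ∑ l, conj (v j) * (K j l * v l)
        = ∑ j, ∑ l, ∑' k : ℕ, (2 * a j * conj (a l)) * (z j * conj (z l)) ^ k := by
          refine Finset.sum_congr rfl fun j _ => Finset.sum_congr rfl fun l _ => ?_
          rw [key j l, tsum_mul_left, tsum_geometric_of_norm_lt_one (hzz j l)]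
      _ = ∑ j, ∑' k : ℕ, ∑ l, (2 * a j * conj (a l)) * (z j * conj (z l)) ^ k := by
          refine Finset.sum_congr rfl fun j _ => ?_
          rw [Summable.tsum_finsetSum (fun l _ => hgeo j l)]
      _ = ∑' k : ℕ, ∑ j, ∑ l, (2 * a j * conj (a l)) * (z j * conj (z l)) ^ k := by
          rw [Summable.tsum_finsetSum (fun j _ => summable_sum (fun l _ => hgeo j l))]
  have hgr : ∀ k : ℕ, (∑ j, ∑ l, (2 * a j * conj (a l)) * (z j * conj (z l)) ^ k)
      = ((2 * Complex.normSq (c k) : ℝ) : ℂ) := by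
    intro k
    have hck : conj (c k) = ∑ l, conj (a l) * conj (z l) ^ k := by
      rw [hcdef]; simp only [_root_.map_sum, _root_.map_mul, _root_.map_pow]
    have hstep : (∑ j, ∑ l, (2 * a j * conj (a l)) * (z j * conj (z l)) ^ k)
        = 2 * (c k * conj (c k)) := by
      rw [hck, hcdef]
      simp only
      rw [Finset.sum_mul_sum, Finset.mul_sum]
      refine Finset.sum_congr rfl fun j _ => ?_
      rw [Finset.mul_sum]
      refine Finset.sum_congr rfl fun l _ => ?_
      rw [mul_pow]
      ring
    rw [hstep, Complex.mul_conj]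
    push_cast
    ring
  have hr : Summable (fun k : ℕ => 2 * Complex.normSq (c k)) := by
    apply Complex.summable_ofReal.mp
    have hg2 := hg
    simp_rw [hgr] at hg2
    exact hg2
  have hposre : (star v ⬝ᵥ K *ᵥ v).re = ∑' k : ℕ, 2 * Complex.normSq (c k) := by
    rw [hLHS, tsum_congr hgr, ← Complex.ofReal_tsum, Complex.ofReal_re]
  have ha0 : a ≠ 0 := by
    intro h
    apply hv
    funext j
    have haj : a j = 0 := by rw [h]; rfl
    rw [hadef] at haj
    simp only at haj
    rcases div_eq_zero_iff.mp haj with h1 | h1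
    · simpa using h1
    · exact absurd h1 (hs1 j)
  have hex : ∃ k0 : ℕ, c k0 ≠ 0 := by
    by_contra h
    push_neg at h
    have hmv : (Matrix.vandermonde z)ᵀ *ᵥ a = 0 := by
      funext k
      have hk := h (k : ℕ)
      rw [hcdef] at hk
      simpa [Matrix.mulVec, dotProduct, Matrix.vandermonde, Matrix.transpose_apply, mul_comm] using hk
    have hdet := Matrix.exists_mulVec_eq_zero_iff.mp ⟨a, ha0, hmv⟩
    rw [Matrix.det_transpose] at hdet
    exact (Matrix.det_vandermonde_ne_zero_iff.mpr hzinj) hdet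
  obtain ⟨k0, hk0⟩ := hex
  rw [hposre]
  exact Summable.tsum_pos hr (fun k => by have := Complex.normSq_nonneg (c k); linarith) k0
    (by have := Complex.normSq_pos.mpr hk0; linarith)

/-- Entrywise complex conjugate of a matrix. -/
def mconj {a b : Type*} (A : Matrix a b ℂ) : Matrix a b ℂ :=
  A.map (starRingEnd ℂ)

/-- Regularity of the soliton solutions of the focusing scalar NLS equation:
the matrix `I + Ξ* K* Ξ K` is invertible for all `(x,t)`. -/
theorem focusing_NLS_soliton_regularity
    {n : ℕ} (s : Fin n → ℂ)
    (hdist : Function.Injective s)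
    (hre : ∀ j : Fin n, 0 < (s j).re)
    (K : Matrix (Fin n) (Fin n) ℂ)
    (hK : ∀ j l : Fin n, K j l = 1 / (s j + (starRingEnd ℂ) (s l)))
    (C : Matrix (Fin n) (Fin n) ℂ)
    (hCdiag : C.IsDiag) (hCunit : IsUnit C)
    (Ξ : ℝ → ℝ → Matrix (Fin n) (Fin n) ℂ)
    (hΞ : ∀ x t : ℝ,
      Ξ x t = C * NormedSpace.exp
        ((-(x : ℂ)) • Matrix.diagonal s - (Complex.I * t) • (Matrix.diagonal s * Matrix.diagonal s))) :
    ∀ x t : ℝ, IsUnit (1 + mconj (Ξ x t) * mconj K * Ξ x t * K) := by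
  intro x t
  classical
  have hCdet : C.det ≠ 0 :=
    isUnit_iff_ne_zero.mp ((Matrix.isUnit_iff_isUnit_det C).mp hCunit)
  have hCd : Matrix.diagonal C.diag = C := hCdiag.diagonal_diag
  have hCjj : ∀ j, C j j ≠ 0 := by
    intro j hj
    apply hCdet
    rw [← hCd, Matrix.det_diagonal]
    exact Finset.prod_eq_zero (Finset.mem_univ j) hj
  set f : Fin n → ℂ := fun j => -(x:ℂ) * s j - Complex.I * t * (s j * s j) with hf
  set d : Fin n → ℂ := fun j => C j j * Complex.exp (f j) with hdd
  have hd : ∀ j, d j ≠ 0 := fun j => mul_ne_zero (hCjj j) (Complex.exp_ne_zero _)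
  have hD : Ξ x t = Matrix.diagonal d := by
    rw [hΞ x t]
    have h1 : (-(x : ℂ)) • Matrix.diagonal s
          - (Complex.I * (t:ℂ)) • (Matrix.diagonal s * Matrix.diagonal s)
        = Matrix.diagonal f := by
      ext i j
      by_cases h : i = j
      · subst h
        simp [Matrix.sub_apply, Matrix.smul_apply, Matrix.diagonal_mul_diagonal,
          Matrix.diagonal_apply_eq, hf]
      · simp [Matrix.sub_apply, Matrix.smul_apply, Matrix.diagonal_mul_diagonal,
          Matrix.diagonal_apply_ne _ h]
    rw [h1, Matrix.exp_diagonal, ← hCd, Matrix.diagonal_mul_diagonal]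
    refine congrArg _ (funext fun j => ?_)
    rw [hdd]
    simp [Matrix.diag, Complex.exp_eq_exp_ℂ]
  rw [Matrix.isUnit_iff_isUnit_det, isUnit_iff_ne_zero]
  intro hdet
  obtain ⟨v, hv0, hmv⟩ := Matrix.exists_mulVec_eq_zero_iff.mpr hdet
  have hu : ∃ u : Fin n → ℂ, u = K *ᵥ v := ⟨_, rfl⟩
  obtain ⟨u, hu⟩ := hu
  set w : Fin n → ℂ := fun j => d j * u j with hwdef
  set conj' := starRingEnd ℂ with hconj
  have hmcD : mconj (Ξ x t) = Matrix.diagonal (fun j => conj' (d j)) := by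
    rw [hD]
    unfold mconj
    rw [Matrix.diagonal_map (map_zero _)]
  have hDw : (Ξ x t) *ᵥ u = w := by
    funext j
    rw [hD, Matrix.mulVec_diagonal]
  have hq : ∀ j, ((mconj K) *ᵥ w) j = - v j * (conj' (d j))⁻¹ := by
    intro j
    have h0 := congrFun hmv j
    rw [Matrix.add_mulVec, Matrix.one_mulVec, ← Matrix.mulVec_mulVec,
      ← Matrix.mulVec_mulVec, ← Matrix.mulVec_mulVec, ← hu, hDw, hmcD] at h0
    rw [Pi.add_apply, Matrix.mulVec_diagonal] at h0
    have hcd : conj' (d j) ≠ 0 := by simp [hconj, hd j]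
    have hx : conj' (d j) * ((mconj K *ᵥ w) j) = - v j := by
      rw [Pi.zero_apply] at h0
      linear_combination h0
    rw [← hx, mul_comm (conj' (d j)), mul_inv_cancel_right₀ hcd]
  have hKsw : ∀ j, (K *ᵥ (star w)) j = - conj' (v j) * (d j)⁻¹ := by
    intro j
    have hs : (K *ᵥ star w) j = conj' ((mconj K *ᵥ w) j) := by
      simp [Matrix.mulVec, dotProduct, mconj, Matrix.map_apply, _root_.map_sum,
        _root_.map_mul, Pi.star_apply, hconj, Complex.star_def]
    rw [hs, hq j]
    simp [hconj]
  have h1 : 0 < (star v ⬝ᵥ K *ᵥ v).re := quadform_pos s hdist hre K hK v hv0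
  have hwne : star w ≠ 0 := by
    intro h
    have hw0 : w = 0 := by
      funext j
      have hj := congrFun h j
      simpa using hj
    have hu0 : u = 0 := by
      funext j
      have hj := congrFun hw0 j
      rw [hwdef] at hj
      simp only at hj
      exact (mul_eq_zero.mp hj).resolve_left (hd j)
    rw [← hu, hu0] at h1
    simp [dotProduct] at h1
  have h2 : 0 < (star (star w) ⬝ᵥ K *ᵥ (star w)).re :=
    quadform_pos s hdist hre K hK (star w) hwne
  have hβ : star (star w) ⬝ᵥ K *ᵥ (star w) = - (star v ⬝ᵥ K *ᵥ v) := by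
    rw [star_star, ← hu, dotProduct]
    calc ∑ j, w j * (K *ᵥ star w) j = ∑ j, -(conj' (v j) * u j) := by
          refine Finset.sum_congr rfl fun j _ => ?_
          rw [hKsw j, hwdef]
          simp only
          rw [show d j * u j * (-conj' (v j) * (d j)⁻¹)
              = -(conj' (v j) * u j) * (d j * (d j)⁻¹) from by ring,
            mul_inv_cancel₀ (hd j), mul_one]
      _ = - ∑ j, conj' (v j) * u j := by rw [← Finset.sum_neg_distrib]
      _ = - (star v ⬝ᵥ u) := by simp [dotProduct, hconj, Complex.star_def]
  rw [hβ] at h2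
  simp only [Complex.neg_re] at h2
  linarith
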